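/- Let N ≥ 1. The linear span, inside the real vector space of functions S_1 → ℝ, of the family of functions {v ↦ (−1)^{m·v} : m ∈ {0,1}^N} has dimension exactly 2^{N−1}. -/

import Mathlib

open Finset

private lemma neg_one_pow_add_eq_zero' {A B : ℕ} (h : ¬ Even (A + B)) :
    (-1 : ℝ) ^ A + (-1 : ℝ) ^ B = 0 := by
  rcases Nat.even_or_odd A with hA | hA
  · have hB : Odd B := by
      rw [Nat.even_add] at h
      rw [← Nat.not_even_iff_odd]
      tauto
    rw [hA.neg_one_pow, hB.neg_one_pow]; ring
  · have hB : Even B := by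
      rw [Nat.even_add] at h
      by_contra hB
      exact h ⟨fun hEA => absurd hEA (Nat.not_even_iff_odd.mpr hA), fun hEB => absurd hEB hB⟩
    rw [hA.neg_one_pow, hB.neg_one_pow]; ring

private lemma parity_helper' {s u a b : ℕ} (hab : a + b = 1) (hu : ¬ Even u) :
    ¬ Even ((s + a * u) + (s + b * u)) := by
  have : a = 0 ∧ b = 1 ∨ a = 1 ∧ b = 0 := by omega
  rw [Nat.even_iff] at hu ⊢
  rcases this with ⟨rfl, rfl⟩ | ⟨rfl, rfl⟩ <;> simp <;> omega

private lemma orth_zero' {N : ℕ} (u : Fin N → ℕ) (l0 : Fin N) (hu : ¬ Even (u l0)) :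
    ∑ m : Fin N → Fin 2, (-1 : ℝ) ^ (∑ l, (m l : ℕ) * u l) = 0 := by
  classical
  apply Finset.sum_ninvolution (fun m => Function.update m l0 (m l0 + 1))
  · intro m
    apply neg_one_pow_add_eq_zero'
    have h1 : ∑ l, (m l : ℕ) * u l
        = ∑ l ∈ univ.erase l0, (m l : ℕ) * u l + (m l0 : ℕ) * u l0 :=
      (Finset.sum_erase_add _ _ (mem_univ l0)).symm
    have h2 : ∑ l, ((Function.update m l0 (m l0 + 1)) l : ℕ) * u l
        = ∑ l ∈ univ.erase l0, (m l : ℕ) * u l + ((m l0 + 1 : Fin 2) : ℕ) * u l0 := by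
      rw [← Finset.sum_erase_add _ _ (mem_univ l0)]
      congr 1
      · exact Finset.sum_congr rfl fun l hl => by
          rw [Function.update_of_ne (Finset.ne_of_mem_erase hl)]
      · rw [Function.update_self]
    rw [h1, h2]
    exact parity_helper'
      ((by decide : ∀ x : Fin 2, (x : ℕ) + ((x + 1 : Fin 2) : ℕ) = 1) (m l0)) hu
  · intro m _ hEq
    have := congrFun hEq l0
    rw [Function.update_self] at this
    exact (by decide : ∀ x : Fin 2, x + 1 ≠ x) (m l0) this
  · intro m; exact mem_univ _
  · intro m
    funext l
    by_cases hl : l = l0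
    · subst hl
      simp only [Function.update_self]
      exact (by decide : ∀ x : Fin 2, x + 1 + 1 = x) (m l)
    · simp only [Function.update_of_ne hl]

private lemma fourier' {N : ℕ} (w v : Fin N → Fin 2) :
    ∑ m : Fin N → Fin 2,
      (-1 : ℝ) ^ (∑ l, (m l : ℕ) * (w l : ℕ)) * (-1 : ℝ) ^ (∑ l, (m l : ℕ) * (v l : ℕ))
      = if v = w then (2 : ℝ) ^ N else 0 := by
  classical
  have key : ∀ m : Fin N → Fin 2,
      (-1 : ℝ) ^ (∑ l, (m l : ℕ) * (w l : ℕ)) * (-1 : ℝ) ^ (∑ l, (m l : ℕ) * (v l : ℕ))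
      = (-1 : ℝ) ^ (∑ l, (m l : ℕ) * ((w l : ℕ) + (v l : ℕ))) := by
    intro m
    rw [← pow_add, ← Finset.sum_add_distrib]
    congr 1
    exact Finset.sum_congr rfl fun l _ => (mul_add _ _ _).symm
  simp only [key]
  by_cases hvw : v = w
  · subst hvw
    rw [if_pos rfl]
    have hone : ∀ m : Fin N → Fin 2,
        (-1 : ℝ) ^ (∑ l, (m l : ℕ) * ((v l : ℕ) + (v l : ℕ))) = 1 := by
      intro m
      apply Even.neg_one_pow
      have : ∑ l, (m l : ℕ) * ((v l : ℕ) + (v l : ℕ)) = 2 * ∑ l, (m l : ℕ) * (v l : ℕ) := by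
        rw [Finset.mul_sum]
        exact Finset.sum_congr rfl fun l _ => by ring
      rw [this]
      exact even_two_mul _
    simp only [hone]
    rw [Finset.sum_const, Finset.card_univ, Fintype.card_fun, Fintype.card_fin,
      Fintype.card_fin, nsmul_eq_mul, mul_one]
    push_cast
    ring
  · rw [if_neg hvw]
    obtain ⟨l0, hl0⟩ : ∃ l0, v l0 ≠ w l0 := by
      by_contra h
      push_neg at h
      exact hvw (funext h)
    apply orth_zero'
    have h1 : (w l0 : ℕ) + (v l0 : ℕ) = 1 :=
      (by decide : ∀ a b : Fin 2, a ≠ b → (b : ℕ) + (a : ℕ) = 1) _ _ hl0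
    rw [h1]
    decide

private def flipFn {N : ℕ} (i0 : Fin N) (v : Fin N → Fin 2) : Fin N → Fin 2 :=
  Function.update v i0 (v i0 + 1)

private lemma flipFn_invol {N : ℕ} (i0 : Fin N) : Function.Involutive (flipFn i0) := by
  intro v
  funext l
  by_cases hl : l = i0
  · subst hl
    simp only [flipFn, Function.update_self]
    exact (by decide : ∀ x : Fin 2, x + 1 + 1 = x) (v l)
  · simp only [flipFn, Function.update_of_ne hl]

private lemma flipFn_parity {N : ℕ} (i0 : Fin N) (v : Fin N → Fin 2) :
    Even (∑ l, ((flipFn i0 v) l : ℕ)) ↔ ¬ Even (∑ l, (v l : ℕ)) := by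
  have h1 : ∑ l, ((flipFn i0 v) l : ℕ)
      = ∑ l ∈ univ.erase i0, (v l : ℕ) + ((v i0 + 1 : Fin 2) : ℕ) := by
    rw [← Finset.sum_erase_add _ _ (mem_univ i0)]
    congr 1
    · exact Finset.sum_congr rfl fun l hl => by
        simp only [flipFn, Function.update_of_ne (Finset.ne_of_mem_erase hl)]
    · simp only [flipFn, Function.update_self]
  have h2 : ∑ l, (v l : ℕ) = ∑ l ∈ univ.erase i0, (v l : ℕ) + (v i0 : ℕ) :=
    (Finset.sum_erase_add _ _ (mem_univ i0)).symm
  have h3 : ((v i0 + 1 : Fin 2) : ℕ) + (v i0 : ℕ) = 1 :=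
    (by decide : ∀ x : Fin 2, ((x + 1 : Fin 2) : ℕ) + (x : ℕ) = 1) (v i0)
  rw [h1, h2]
  simp only [Nat.even_iff]
  omega

private lemma single_eq_smul' {S : Type*} [DecidableEq S] (w : S) (c : ℝ) :
    (Pi.single w c : S → ℝ) = c • (Pi.single w 1 : S → ℝ) := by
  rw [← Pi.single_smul, smul_eq_mul, mul_one]

private lemma card_odd' {N : ℕ} (hN : 1 ≤ N) :
    Fintype.card {v : Fin N → Fin 2 // ¬ Even (∑ l, (v l : ℕ))} = 2 ^ (N - 1) := by
  classical
  have e : {v : Fin N → Fin 2 // ¬ Even (∑ l, (v l : ℕ))}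
      ≃ {v : Fin N → Fin 2 // Even (∑ l, (v l : ℕ))} :=
    (Function.Involutive.toPerm _ (flipFn_invol (⟨0, hN⟩ : Fin N))).subtypeEquiv fun v => by
      simpa using (flipFn_parity (⟨0, hN⟩ : Fin N) v).symm
  have hcc : Fintype.card {v : Fin N → Fin 2 // ¬ Even (∑ l, (v l : ℕ))}
      = Fintype.card {v : Fin N → Fin 2 // Even (∑ l, (v l : ℕ))} := Fintype.card_congr e
  have hsum : Fintype.card {v : Fin N → Fin 2 // Even (∑ l, (v l : ℕ))}
      + Fintype.card {v : Fin N → Fin 2 // ¬ Even (∑ l, (v l : ℕ))} = 2 ^ N := by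
    rw [Fintype.card_subtype, Fintype.card_subtype,
      Finset.card_filter_add_card_filter_not, Finset.card_univ,
      Fintype.card_fun, Fintype.card_fin, Fintype.card_fin]
  have h2 : 2 ^ N = 2 * 2 ^ (N - 1) := by
    conv_lhs => rw [← Nat.sub_add_cancel hN]
    rw [pow_succ, Nat.mul_comm]
  have h3 : 2 * Fintype.card {v : Fin N → Fin 2 // ¬ Even (∑ l, (v l : ℕ))}
      = 2 * 2 ^ (N - 1) := by
    rw [two_mul]
    nth_rewrite 1 [hcc]
    rw [hsum, h2]
  exact Nat.eq_of_mul_eq_mul_left (by norm_num) h3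

theorem stmt10 (N : ℕ) (hN : 1 ≤ N) :
    Module.finrank ℝ
      ↥(Submodule.span ℝ (Set.range
          (fun m : Fin N → Fin 2 =>
            fun v : {v : Fin N → Fin 2 // ¬ Even (∑ l, (v l : ℕ))} =>
              ((-1 : ℝ) ^ (∑ l, (m l : ℕ) * (v.1 l : ℕ))))))
      = 2 ^ (N - 1) := by
  classical
  set F : (Fin N → Fin 2) → ({v : Fin N → Fin 2 // ¬ Even (∑ l, (v l : ℕ))} → ℝ) :=
    fun m => fun v => ((-1 : ℝ) ^ (∑ l, (m l : ℕ) * (v.1 l : ℕ))) with hF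
  have hsingle : ∀ w : {v : Fin N → Fin 2 // ¬ Even (∑ l, (v l : ℕ))},
      Pi.single w (1 : ℝ) ∈ Submodule.span ℝ (Set.range F) := by
    intro w
    have heq : Pi.single w (1 : ℝ)
        = ((2 : ℝ) ^ N)⁻¹ •
            ∑ m : Fin N → Fin 2, ((-1 : ℝ) ^ (∑ l, (m l : ℕ) * (w.1 l : ℕ))) • F m := by
      funext v
      have hfr := fourier' w.1 v.1
      simp only [Pi.smul_apply, Finset.sum_apply, smul_eq_mul, hF]
      rw [hfr, Pi.single_apply]
      have hiff : (v = w) ↔ (v.1 = w.1) := Subtype.ext_iff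
      by_cases hvw : v.1 = w.1
      · rw [if_pos (hiff.mpr hvw), if_pos hvw]
        field_simp
      · rw [if_neg (fun h => hvw (hiff.mp h)), if_neg hvw, mul_zero]
    rw [heq]
    exact Submodule.smul_mem _ _ (Submodule.sum_mem _ fun m _ =>
      Submodule.smul_mem _ _ (Submodule.subset_span ⟨m, rfl⟩))
  have htop : Submodule.span ℝ (Set.range F) = ⊤ := by
    rw [Submodule.eq_top_iff']
    intro f
    have hf : f = ∑ w, Pi.single w (f w) := (Finset.univ_sum_single f).symm
    rw [hf]
    refine Submodule.sum_mem _ fun w _ => ?_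
    rw [single_eq_smul' w (f w)]
    exact Submodule.smul_mem _ _ (hsingle w)
  rw [htop, finrank_top, Module.finrank_fintype_fun_eq_card, card_odd' hN]
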